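/- Let R be a commutative unital ring and I an ideal of R such that every R-module is I-reduced. Then for every R-module M, the quotient module M/(0 :_M I) is I-torsionfree; that is, (0 :_{M/(0 :_M I)} I) = 0, and hence Γ_I(M/Γ_I(M)) = 0, where Γ_I(N) = {n ∈ N : I^k n = 0 for some k ≥ 1}. -/

import Mathlib

/-!
STATEMENT 2: Let `R` be a commutative unital ring and `I` an ideal of `R` such that every
`R`-module is `I`-reduced. Then for every `R`-module `M`, the quotient module `M/(0 :_M I)`
is `I`-torsionfree: `(0 :_{M/(0 :_M I)} I) = 0`, and hence `Γ_I(M/Γ_I(M)) = 0`, where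
`Γ_I(N) = {n ∈ N : I^k n = 0 for some k ≥ 1}`.
-/

universe u

/-- The `I`-torsion submodule `Γ_I(M) = {m ∈ M : I^k m = 0 for some k ≥ 1}`, realized as the
(directed) supremum of the submodules of elements annihilated by `I^k`, `k ≥ 1`. -/
noncomputable def torsionGamma (R : Type u) [CommRing R] (I : Ideal R) (M : Type u)
    [AddCommGroup M] [Module R M] : Submodule R M :=
  ⨆ k : ℕ, Submodule.torsionBySet R M ((I ^ (k + 1) : Ideal R) : Set R)

section aux
variable {R : Type u} [CommRing R] {I : Ideal R}
variable (hred : ∀ (N : Type u) [AddCommGroup N] [Module R N],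
      ∀ m : N, (∀ r ∈ I ^ 2, r • m = 0) → ∀ r ∈ I, r • m = 0)
variable {M : Type u} [AddCommGroup M] [Module R M]

include hred in
lemma aux_sq (m : M) (h : ∀ r ∈ I, ∀ s ∈ I, s • (r • m) = 0) : ∀ r ∈ I, r • m = 0 := by
  apply hred M m
  intro t ht
  rw [pow_two] at ht
  refine Submodule.mul_induction_on ht (fun a ha b hb => ?_) (fun x y hx hy => ?_)
  · rw [mul_smul]; exact h b hb a ha
  · rw [add_smul, hx, hy, add_zero]

include hred in
lemma aux_pow (k : ℕ) (m : M) (h : ∀ r ∈ I ^ (k + 1), r • m = 0) : ∀ r ∈ I, r • m = 0 := by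
  induction k generalizing m with
  | zero => simpa using h
  | succ k ih =>
    apply aux_sq hred
    intro r hr
    apply ih
    intro s hs
    rw [← mul_smul]
    apply h
    rw [pow_succ]
    exact Ideal.mul_mem_mul hs hr

include hred in
lemma gamma_eq : torsionGamma R I M = Submodule.torsionBySet R M (I : Set R) := by
  apply le_antisymm
  · apply iSup_le
    intro k m hm
    rw [Submodule.mem_torsionBySet_iff] at hm ⊢
    intro r
    exact aux_pow hred k m (fun s hs => hm ⟨s, hs⟩) r r.2
  · have := le_iSup (fun k : ℕ => Submodule.torsionBySet R M ((I ^ (k + 1) : Ideal R) : Set R)) 0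
    simpa [torsionGamma] using this

include hred in
lemma part1 :
    Submodule.torsionBySet R (M ⧸ Submodule.torsionBySet R M (I : Set R)) (I : Set R) = ⊥ := by
  rw [eq_bot_iff]
  intro x hx
  obtain ⟨m, rfl⟩ := Submodule.Quotient.mk_surjective _ x
  rw [Submodule.mem_torsionBySet_iff] at hx
  rw [Submodule.mem_bot, Submodule.Quotient.mk_eq_zero, Submodule.mem_torsionBySet_iff]
  intro r
  apply aux_sq hred m
  · intro s hs t ht
    have := hx ⟨s, hs⟩
    rw [← Submodule.Quotient.mk_smul, Submodule.Quotient.mk_eq_zero,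
      Submodule.mem_torsionBySet_iff] at this
    exact this ⟨t, ht⟩
  · exact r.2

end aux

theorem stmt2 (R : Type u) [CommRing R] (I : Ideal R)
    (hred : ∀ (N : Type u) [AddCommGroup N] [Module R N],
      ∀ m : N, (∀ r ∈ I ^ 2, r • m = 0) → ∀ r ∈ I, r • m = 0) :
    ∀ (M : Type u) [AddCommGroup M] [Module R M],
      Submodule.torsionBySet R (M ⧸ Submodule.torsionBySet R M (I : Set R)) (I : Set R) = ⊥ ∧
      torsionGamma R I (M ⧸ torsionGamma R I M) = ⊥ := by
  intro M _ _
  refine ⟨part1 hred, ?_⟩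
  rw [gamma_eq hred, gamma_eq hred]
  exact part1 hred
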